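/- arXiv:1304.2999 — 2 statements merged into one kernel-verified Lean document; each statement's English description precedes it below -/
import Mathlib

section
/- Let {L_k}_{k=1}^K be K distinct d-dimensional linear subspaces of ℝ^D (d < D), and for each k let the data set contain N_k > d points sampled i.i.d. from a probability measure μ_k supported on L_k that assigns measure zero to every proper subspace of L_k. Define GD_True(Π) := ‖(dim span(Π₁),...,dim span(Π_m))‖_p for a partition Π of the data into m ≤ K sets. If p > ln(K)/(ln(d+1) − ln(d)), then almost surely the natural partition (grouping points by the subspace they were sampled from) is the unique minimizer of GD_True among all partitions into at most K sets. -/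
open MeasureTheory

section AuxLemmas
open Set Submodule Module

set_option maxHeartbeats 1000000 in
lemma measurableSet_mem_span (Dn : ℕ) (n : Type*) [Fintype n] :
    MeasurableSet {q : (Fin Dn → ℝ) × (n → (Fin Dn → ℝ)) |
      q.1 ∈ Submodule.span ℝ (Set.range q.2)} := by
  classical
  have hset : {q : (Fin Dn → ℝ) × (n → (Fin Dn → ℝ)) | q.1 ∈ Submodule.span ℝ (Set.range q.2)}
      = ⋃ (m : ℕ), {q : (Fin Dn → ℝ) × (n → (Fin Dn → ℝ)) |
          ∃ c : n → ℝ, (∀ i, |c i| ≤ (m : ℝ)) ∧ ∑ i, c i • q.2 i = q.1} := by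
    ext q
    simp only [Set.mem_setOf_eq, Set.mem_iUnion]
    constructor
    · intro hq
      obtain ⟨c, hc⟩ := (mem_span_range_iff_exists_fun ℝ).1 hq
      refine ⟨⌈‖c‖⌉₊, c, fun i => ?_, hc⟩
      calc |c i| = ‖c i‖ := rfl
        _ ≤ ‖c‖ := norm_le_pi_norm c i
        _ ≤ (⌈‖c‖⌉₊ : ℝ) := Nat.le_ceil _
    · rintro ⟨m, c, -, hc⟩
      exact (mem_span_range_iff_exists_fun ℝ).2 ⟨c, hc⟩
  rw [hset]
  refine MeasurableSet.iUnion fun m => ?_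
  refine (IsSeqClosed.isClosed ?_).measurableSet
  intro qs q hqs hq
  choose c hc1 hc2 using hqs
  have hcompact : IsCompact {c : n → ℝ | ∀ i, |c i| ≤ (m : ℝ)} := by
    have : {c : n → ℝ | ∀ i, |c i| ≤ (m : ℝ)}
        = Set.pi Set.univ (fun _ : n => Set.Icc (-(m : ℝ)) m) := by
      ext c; simp only [Set.mem_setOf_eq, Set.mem_univ_pi, Set.mem_Icc, abs_le]
    rw [this]
    exact isCompact_univ_pi fun _ => isCompact_Icc
  obtain ⟨cl, hclmem, φ, hφ, hcl⟩ := hcompact.tendsto_subseq hc1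
  refine ⟨cl, hclmem, ?_⟩
  have hcont : Continuous fun r : (n → ℝ) × ((Fin Dn → ℝ) × (n → (Fin Dn → ℝ))) =>
      (∑ i, r.1 i • r.2.2 i) - r.2.1 := by
    apply Continuous.sub
    · apply continuous_finset_sum
      intro i _
      exact ((continuous_apply i).comp continuous_fst).smul
        ((continuous_apply i).comp (continuous_snd.comp continuous_snd))
    · exact continuous_fst.comp continuous_snd
  have hlim : Filter.Tendsto (fun j => (c (φ j), qs (φ j))) Filter.atTop (nhds (cl, q)) :=
    hcl.prodMk_nhds (hq.comp hφ.tendsto_atTop)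
  have h0 : Filter.Tendsto (fun j => (∑ i, c (φ j) i • (qs (φ j)).2 i) - (qs (φ j)).1)
      Filter.atTop (nhds ((∑ i, cl i • q.2 i) - q.1)) := (hcont.tendsto _).comp hlim
  have h0' : (fun j => (∑ i, c (φ j) i • (qs (φ j)).2 i) - (qs (φ j)).1) = fun _ => 0 := by
    funext j; rw [hc2 (φ j)]; simp
  rw [h0'] at h0
  have := tendsto_nhds_unique h0 tendsto_const_nhds
  exact sub_eq_zero.1 this

lemma pi_null_of_update {ι' : Type*} [Fintype ι'] [DecidableEq ι'] {α : ι' → Type*}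
    [∀ i, MeasurableSpace (α i)]
    (μ : ∀ i, Measure (α i)) [∀ i, SigmaFinite (μ i)] (i₀ : ι') {B : Set (∀ i, α i)}
    (hB : MeasurableSet B) (h : ∀ f, μ i₀ {x | Function.update f i₀ x ∈ B} = 0) :
    Measure.pi μ B = 0 := by
  classical
  rcases isEmpty_or_nonempty (α i₀) with he | hne
  · haveI : IsEmpty (∀ i, α i) := ⟨fun f => he.elim (f i₀)⟩
    rw [Set.eq_empty_of_isEmpty B]
    simp
  · obtain ⟨p, hp⟩ : ∃ p : ι' → Prop, p = fun i => i = i₀ := ⟨_, rfl⟩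
    letI hU : Unique {i // p i} :=
      ⟨⟨⟨i₀, by rw [hp]⟩⟩, fun i => Subtype.ext ((congrFun hp ↑i) ▸ i.2)⟩
    have MP1 := measurePreserving_piEquivPiSubtypeProd (μ := μ) p
    set e := MeasurableEquiv.piEquivPiSubtypeProd α p with he
    have h2 := MP1.measure_preimage_equiv (e.symm ⁻¹' B)
    rw [show ⇑e ⁻¹' (⇑e.symm ⁻¹' B) = B from by ext z; simp] at h2
    rw [h2, Measure.prod_apply_symm (e.symm.measurable hB)]
    have hzero : ∀ y : (∀ i : {i // ¬ p i}, α i),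
        (Measure.pi fun i : {i // p i} => μ i) ((fun x => (x, y)) ⁻¹' (⇑e.symm ⁻¹' B)) = 0 := by
      intro y
      have MP2 := measurePreserving_piUnique (fun i : {i // p i} => μ i)
      set e2 := MeasurableEquiv.piUnique (fun i : {i // p i} => α i) with he2
      have h3 : (fun x => (x, y)) ⁻¹' (⇑e.symm ⁻¹' B)
          = ⇑e2 ⁻¹' (⇑e2.symm ⁻¹' ((fun x => (x, y)) ⁻¹' (⇑e.symm ⁻¹' B))) := by
        ext z; simp
      rw [h3, MP2.measure_preimage_equiv]
      obtain ⟨x₁⟩ := hne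
      have hkey : ∀ x : α i₀, (e.symm (e2.symm x, y) : ∀ i, α i)
          = Function.update (e.symm (e2.symm x₁, y) : ∀ i, α i) i₀ x := by
        intro x
        funext i
        by_cases hi : p i
        · have hi' : i = i₀ := (congrFun hp i) ▸ hi
          subst hi'
          rw [Function.update_self]
          show (Equiv.piEquivPiSubtypeProd p α).symm ((Equiv.piUnique _).symm x, y) i = x
          simp only [Equiv.piEquivPiSubtypeProd, Equiv.coe_fn_symm_mk, dif_pos hi]
          rfl
        · have hne' : i ≠ i₀ := fun hii => hi ((congrFun hp i).symm ▸ hii)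
          show (Equiv.piEquivPiSubtypeProd p α).symm ((Equiv.piUnique _).symm x, y) i
            = Function.update ((Equiv.piEquivPiSubtypeProd p α).symm
                ((Equiv.piUnique _).symm x₁, y)) i₀ x i
          rw [Function.update_of_ne hne']
          simp only [Equiv.piEquivPiSubtypeProd, Equiv.coe_fn_symm_mk, dif_neg hi]
      have hseteq : (⇑e2.symm ⁻¹' ((fun x => (x, y)) ⁻¹' (⇑e.symm ⁻¹' B)))
          = {x | Function.update (e.symm (e2.symm x₁, y) : ∀ i, α i) i₀ x ∈ B} := by
        ext x
        simp only [Set.mem_preimage, Set.mem_setOf_eq, hkey x]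
        exact Iff.rfl
      rw [hseteq]
      exact h _
    simp only [hzero]
    simp

lemma exists_redundant {V' : Type*} [AddCommGroup V'] [Module ℝ V'] {ι : Type*} (v : ι → V')
    (A : Set ι) [Fintype ↥A] (hdep : ¬ LinearIndependent ℝ (fun s : ↥A => v ↑s)) :
    ∃ s ∈ A, v s ∈ Submodule.span ℝ (v '' (A \ {s})) := by
  by_contra hcon
  push_neg at hcon
  apply hdep
  rw [linearIndependent_iff_notMem_span]
  intro i
  have himg : (fun s : ↥A => v ↑s) '' (Set.univ \ {i}) = v '' (A \ {↑i}) := by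
    ext x
    constructor
    · rintro ⟨t, ⟨-, ht⟩, rfl⟩
      refine ⟨↑t, ⟨t.2, fun hc => ht ?_⟩, rfl⟩
      simp only [Set.mem_singleton_iff] at hc ⊢
      exact Subtype.ext hc
    · rintro ⟨u, ⟨huA, hu⟩, rfl⟩
      refine ⟨⟨u, huA⟩, ⟨trivial, fun hc => hu ?_⟩, rfl⟩
      simp only [Set.mem_singleton_iff] at hc ⊢
      exact congrArg Subtype.val hc
  rw [himg]
  exact hcon ↑i i.2

end AuxLemmas
open Finset

lemma exists_big_mixed_fiber {K d : ℕ} (hd : 1 ≤ d) (N : Fin K → ℕ) (hN : ∀ k, d < N k)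
    (π : ((k : Fin K) × Fin (N k)) → Fin K)
    (hπ : ¬ ∀ s t, π s = π t ↔ s.1 = t.1) :
    ∃ j : Fin K,
      d + 1 ≤ (Finset.univ.filter fun s : (k : Fin K) × Fin (N k) => π s = j).card ∧
      ∃ s t, π s = j ∧ π t = j ∧ s.1 ≠ t.1 := by
  classical
  by_contra hcon
  push_neg at hcon
  apply hπ
  have H : ∀ j : Fin K, (∃ s t, π s = j ∧ π t = j ∧ s.1 ≠ t.1) →
      (Finset.univ.filter fun s : (k : Fin K) × Fin (N k) => π s = j).card ≤ d := by
    intro j hmix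
    by_contra hbig
    push_neg at hbig
    obtain ⟨s, t, hs, ht, hst⟩ := hmix
    exact hst (hcon j hbig s t hs ht)
  have hfibcard : ∀ k : Fin K,
      (univ.filter fun s : (k' : Fin K) × Fin (N k') => s.1 = k).card = N k := by
    intro k
    rw [← Fintype.card_subtype]
    have e : Fin (N k) ≃ {s : (k' : Fin K) × Fin (N k') // s.1 = k} :=
      { toFun := fun i => ⟨⟨k, i⟩, rfl⟩
        invFun := fun s => Fin.cast (congrArg N s.2) s.1.2
        left_inv := fun i => rfl
        right_inv := by rintro ⟨⟨k', i⟩, rfl⟩; rfl }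
    rw [Fintype.card_congr e.symm, Fintype.card_fin]
  set Mix : Finset (Fin K) :=
    univ.filter (fun j => ∃ s t, π s = j ∧ π t = j ∧ s.1 ≠ t.1) with hMixdef
  set Sd : Finset (Fin K) :=
    univ.filter (fun k => ∀ s : (k' : Fin K) × Fin (N k'), s.1 = k → π s ∈ Mix) with hSdef
  have hex : ∀ k ∈ univ \ Sd, ∃ s : (k' : Fin K) × Fin (N k'), s.1 = k ∧ π s ∉ Mix := by
    intro k hk
    simp only [hSdef, mem_sdiff, mem_univ, true_and, mem_filter] at hk
    push_neg at hk
    obtain ⟨s, h1, h2⟩ := hk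
    exact ⟨s, h1, h2⟩
  choose g hg1 hg2 using hex
  have hinj : (univ \ Sd).card ≤ (univ \ Mix).card := by
    set f : Fin K → Fin K := fun k => if h : k ∈ univ \ Sd then π (g k h) else k with hf
    apply Finset.card_le_card_of_injOn f
    · intro k hk
      have hfk : f k = π (g k hk) := by simp only [hf]; exact dif_pos hk
      rw [hfk]
      simp only [Finset.coe_sdiff, Finset.coe_univ, Set.mem_diff, Set.mem_univ, true_and, Finset.mem_coe]
      exact hg2 k hk
    · intro a ha b hb hab
      by_contra hne
      have hfa : f a = π (g a ha) := by simp only [hf]; exact dif_pos ha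
      have hfb : f b = π (g b hb) := by simp only [hf]; exact dif_pos hb
      rw [hfa, hfb] at hab
      apply hg2 a ha
      simp only [hMixdef, mem_filter, mem_univ, true_and]
      exact ⟨g a ha, g b hb, rfl, hab.symm, by rw [hg1 a ha, hg1 b hb]; exact hne⟩
  have hMS : Mix.card ≤ Sd.card := by
    have h1 : (univ \ Sd).card = K - Sd.card := by
      rw [card_sdiff_of_subset (subset_univ _), card_univ, Fintype.card_fin]
    have h2 : (univ \ Mix).card = K - Mix.card := by
      rw [card_sdiff_of_subset (subset_univ _), card_univ, Fintype.card_fin]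
    have h3 := card_le_univ Sd
    have h4 := card_le_univ Mix
    simp only [card_univ, Fintype.card_fin] at h3 h4
    omega
  set Pp : Finset ((k' : Fin K) × Fin (N k')) := univ.filter (fun s => s.1 ∈ Sd) with hPp
  set Q : Finset ((k' : Fin K) × Fin (N k')) := univ.filter (fun s => π s ∈ Mix) with hQ
  have hPQ : Pp ⊆ Q := by
    intro s hs
    simp only [hPp, mem_filter, mem_univ, true_and] at hs
    simp only [hSdef, mem_filter, mem_univ, true_and] at hs
    simp only [hQ, mem_filter, mem_univ, true_and]
    exact hs s rfl
  have hPcard : Sd.card * (d + 1) ≤ Pp.card := by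
    rw [Finset.card_eq_sum_card_fiberwise (f := Sigma.fst) (t := Sd)
      (fun s hs => by simpa [hPp] using hs)]
    have hfib : ∀ k ∈ Sd, (Pp.filter (fun s => s.1 = k)).card = N k := by
      intro k hk
      have : Pp.filter (fun s => s.1 = k) = univ.filter (fun s : (k' : Fin K) × Fin (N k') => s.1 = k) := by
        ext s
        simp only [hPp, mem_filter, mem_univ, true_and, filter_filter]
        constructor
        · rintro ⟨-, h⟩; exact h
        · intro h; exact ⟨h ▸ hk, h⟩
      rw [this, hfibcard]
    calc Sd.card * (d + 1) = ∑ _k ∈ Sd, (d + 1) := by rw [sum_const, smul_eq_mul]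
      _ ≤ ∑ k ∈ Sd, N k := sum_le_sum (fun k _ => hN k)
      _ = ∑ k ∈ Sd, (Pp.filter (fun s => s.1 = k)).card := by
          exact (sum_congr rfl hfib).symm
  have hQcard : Q.card ≤ Mix.card * d := by
    rw [Finset.card_eq_sum_card_fiberwise (f := π) (t := Mix)
      (fun s hs => by simpa [hQ] using hs)]
    calc ∑ j ∈ Mix, (Q.filter (fun s => π s = j)).card
        ≤ ∑ _j ∈ Mix, d := by
          apply sum_le_sum
          intro j hj
          have hj' : ∃ s t, π s = j ∧ π t = j ∧ s.1 ≠ t.1 := by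
            simpa [hMixdef] using hj
          refine le_trans (Finset.card_le_card ?_) (H j hj')
          intro s hs
          simp only [hQ, mem_filter, mem_univ, true_and, filter_filter] at hs ⊢
          exact hs.2
      _ = Mix.card * d := by rw [sum_const, smul_eq_mul]
  have hSd0 : Sd.card = 0 := by
    have h1 : Sd.card * (d + 1) ≤ Sd.card * d :=
      le_trans hPcard (le_trans (card_le_card hPQ)
        (le_trans hQcard (Nat.mul_le_mul_right d hMS)))
    have h2 : Sd.card * (d + 1) = Sd.card * d + Sd.card := by ring
    omega
  have hMix0 : Mix = ∅ := card_eq_zero.1 (le_antisymm (hSd0 ▸ hMS) (Nat.zero_le _))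
  have hpure : ∀ s t, π s = π t → s.1 = t.1 := by
    intro s t hst
    by_contra hne
    have hmem : π s ∈ Mix := by
      simp only [hMixdef, mem_filter, mem_univ, true_and]
      exact ⟨s, t, rfl, hst.symm, hne⟩
    rw [hMix0] at hmem
    exact absurd hmem (notMem_empty _)
  intro s t
  constructor
  · exact hpure s t
  · intro h1
    have hpos : ∀ k, 0 < N k := fun k => lt_of_le_of_lt (Nat.zero_le d) (hN k)
    set r : Fin K → Fin K := fun k => π ⟨k, ⟨0, hpos k⟩⟩ with hr
    have hrinj : Function.Injective r := fun a b hab => hpure _ _ hab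
    have hrsurj : Function.Surjective r := Finite.surjective_of_injective hrinj
    by_contra hne
    obtain ⟨k₁, hk₁⟩ := hrsurj (π s)
    obtain ⟨k₂, hk₂⟩ := hrsurj (π t)
    have e1 : k₁ = s.1 := hpure _ s hk₁
    have e2 : k₂ = t.1 := hpure _ t hk₂
    have hkk : k₁ ≠ k₂ := fun h => hne (by rw [← hk₁, ← hk₂, h])
    exact hkk (by rw [e1, e2, h1])

set_option maxHeartbeats 2000000 in
/-- Theorem 2 of the paper: if p > ln K / (ln(d+1) - ln d), then almost surely the
natural partition is the unique minimizer (among partitions into at most K sets,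
uniqueness up to relabeling) of the global dimension defined via true dimensions. -/
theorem natural_partition_uniquely_minimizes_GD
    (D d K : ℕ) (hd : 1 ≤ d) (hdD : d < D) (hK : 1 ≤ K)
    (p : ℝ) (hp : p > Real.log K / (Real.log ((d : ℝ) + 1) - Real.log d))
    (L : Fin K → Submodule ℝ (Fin D → ℝ)) (hLinj : Function.Injective L)
    (hLd : ∀ k, Module.finrank ℝ (L k) = d)
    (μ : Fin K → Measure (Fin D → ℝ)) [∀ k, IsProbabilityMeasure (μ k)]
    (hsupp : ∀ k, μ k (↑(L k))ᶜ = 0)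
    (hnd : ∀ (k : Fin K) (S : Submodule ℝ (Fin D → ℝ)), S < L k → μ k ↑S = 0)
    (N : Fin K → ℕ) (hN : ∀ k, d < N k) :
    (Measure.pi fun k => Measure.pi fun _ : Fin (N k) => μ k)
      {ω : (k : Fin K) → Fin (N k) → (Fin D → ℝ) |
        ∀ π : ((k : Fin K) × Fin (N k)) → Fin K,
          (¬ ∀ s t, π s = π t ↔ s.1 = t.1) →
          (∑ j : Fin K, (Module.finrank ℝ
              (Submodule.span ℝ {x | ∃ s : (k : Fin K) × Fin (N k), s.1 = j ∧ ω s.1 s.2 = x}) : ℝ) ^ p) ^ (1 / p)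
          < (∑ j : Fin K, (Module.finrank ℝ
              (Submodule.span ℝ {x | ∃ s : (k : Fin K) × Fin (N k), π s = j ∧ ω s.1 s.2 = x}) : ℝ) ^ p) ^ (1 / p)}
      = 1 := by
  classical
  -- basic positivity facts about p
  have hd0 : (0 : ℝ) < (d : ℝ) := by exact_mod_cast hd
  have hdenom : (0 : ℝ) < Real.log ((d : ℝ) + 1) - Real.log d :=
    sub_pos.2 (Real.log_lt_log hd0 (by linarith))
  have hlogK : (0 : ℝ) ≤ Real.log K := Real.log_nonneg (by exact_mod_cast hK)
  have hp0 : (0 : ℝ) < p := lt_of_le_of_lt (div_nonneg hlogK hdenom.le) hp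
  have hKd : (K : ℝ) * (d : ℝ) ^ p < ((d : ℝ) + 1) ^ p := by
    have hlog : Real.log K < p * (Real.log ((d : ℝ) + 1) - Real.log d) := (div_lt_iff₀ hdenom).1 hp
    have hK0 : (0 : ℝ) < (K : ℝ) := by exact_mod_cast hK
    have hdp : (0 : ℝ) < (d : ℝ) ^ p := Real.rpow_pos_of_pos hd0 p
    have hL : Real.log ((K : ℝ) * (d : ℝ) ^ p) = Real.log K + p * Real.log d := by
      rw [Real.log_mul (ne_of_gt hK0) (ne_of_gt hdp), Real.log_rpow hd0]
    have hR : Real.log (((d : ℝ) + 1) ^ p) = p * Real.log ((d : ℝ) + 1) :=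
      Real.log_rpow (show (0:ℝ) < (d : ℝ) + 1 by linarith) p
    have : Real.log ((K : ℝ) * (d : ℝ) ^ p) < Real.log (((d : ℝ) + 1) ^ p) := by
      rw [hL, hR]; nlinarith
    exact (Real.log_lt_log_iff (by positivity) (by positivity)).1 this
  set P := (Measure.pi fun k => Measure.pi fun _ : Fin (N k) => μ k) with hP
  set Good : Set ((k : Fin K) → Fin (N k) → (Fin D → ℝ)) := {ω |
    (∀ s : (k : Fin K) × Fin (N k), ω s.1 s.2 ∈ L s.1) ∧
    (∀ (s : (k : Fin K) × Fin (N k)) (k : Fin K), k ≠ s.1 → ω s.1 s.2 ∉ L k) ∧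
    (∀ (s : (k : Fin K) × Fin (N k)) (S : Set ((k : Fin K) × Fin (N k))), s ∉ S →
      ω s.1 s.2 ∈ Submodule.span ℝ ((fun t : (k : Fin K) × Fin (N k) => ω t.1 t.2) '' S) →
      L s.1 ≤ Submodule.span ℝ ((fun t : (k : Fin K) × Fin (N k) => ω t.1 t.2) '' S))} with hGood
  -- # The deterministic part
  have hGoodE : ∀ ω, ω ∈ Good → ∀ π : ((k : Fin K) × Fin (N k)) → Fin K,
      (¬ ∀ s t, π s = π t ↔ s.1 = t.1) →
      (∑ j : Fin K, (Module.finrank ℝ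
          (Submodule.span ℝ {x | ∃ s : (k : Fin K) × Fin (N k), s.1 = j ∧ ω s.1 s.2 = x}) : ℝ) ^ p) ^ (1 / p)
      < (∑ j : Fin K, (Module.finrank ℝ
          (Submodule.span ℝ {x | ∃ s : (k : Fin K) × Fin (N k), π s = j ∧ ω s.1 s.2 = x}) : ℝ) ^ p) ^ (1 / p) := by
    rintro ω ⟨g1, g2, gB⟩ π hπ
    -- natural spans equal the subspaces
    have hnat : ∀ j : Fin K,
        Submodule.span ℝ {x | ∃ s : (k : Fin K) × Fin (N k), s.1 = j ∧ ω s.1 s.2 = x} = L j := by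
      intro j
      have hseteq : {x | ∃ s : (k : Fin K) × Fin (N k), s.1 = j ∧ ω s.1 s.2 = x}
          = (fun t : (k : Fin K) × Fin (N k) => ω t.1 t.2) '' {s | s.1 = j} := by
        ext x
        constructor
        · rintro ⟨s, h1, h2⟩; exact ⟨s, h1, h2⟩
        · rintro ⟨s, h1, h2⟩; exact ⟨s, h1, h2⟩
      rw [hseteq]
      apply le_antisymm
      · rw [Submodule.span_le]
        rintro x ⟨s, hs, rfl⟩
        exact hs ▸ g1 s
      · -- there must be a redundant point
        have hdep : ¬ LinearIndependent ℝ
            (fun s : ↥{s : (k : Fin K) × Fin (N k) | s.1 = j} => ω s.1.1 s.1.2) := by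
          intro hli
          have hcard := finrank_span_eq_card hli
          have hrange : Set.range (fun s : ↥{s : (k : Fin K) × Fin (N k) | s.1 = j} => ω s.1.1 s.1.2)
              = (fun t : (k : Fin K) × Fin (N k) => ω t.1 t.2) '' {s | s.1 = j} :=
            (Set.image_eq_range (fun t : (k : Fin K) × Fin (N k) => ω t.1 t.2) {s | s.1 = j}).symm
          have hle : Submodule.span ℝ (Set.range (fun s : ↥{s : (k : Fin K) × Fin (N k) | s.1 = j} => ω s.1.1 s.1.2)) ≤ L j := by
            rw [hrange, Submodule.span_le]
            rintro x ⟨s, hs, rfl⟩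
            exact hs ▸ g1 s
          have hcardA : Fintype.card ↥{s : (k : Fin K) × Fin (N k) | s.1 = j} = N j := by
            have e : Fin (N j) ≃ ↥{s : (k : Fin K) × Fin (N k) | s.1 = j} :=
              { toFun := fun i => ⟨⟨j, i⟩, rfl⟩
                invFun := fun s => Fin.cast (congrArg N s.2) s.1.2
                left_inv := fun i => rfl
                right_inv := by rintro ⟨⟨k', i⟩, rfl⟩; rfl }
            rw [← Fintype.card_congr e, Fintype.card_fin]
          have h1 := Submodule.finrank_mono hle
          rw [hcard, hcardA, hLd j] at h1
          exact absurd h1 (not_le.2 (hN j))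
        obtain ⟨s, hsA, hsmem⟩ := exists_redundant
          (fun t : (k : Fin K) × Fin (N k) => ω t.1 t.2) {s | s.1 = j} hdep
        have hLle := gB s ({s' | s'.1 = j} \ {s}) (fun hc => hc.2 rfl) hsmem
        rw [show s.1 = j from hsA] at hLle
        exact le_trans hLle (Submodule.span_mono (Set.image_mono Set.diff_subset))
    -- get a big mixed fiber
    obtain ⟨j₀, hcard, hmix⟩ := exists_big_mixed_fiber hd N hN π hπ
    -- the span of the mixed fiber has dimension at least d+1
    have hbig : d + 1 ≤ Module.finrank ℝ
        (Submodule.span ℝ {x | ∃ s : (k : Fin K) × Fin (N k), π s = j₀ ∧ ω s.1 s.2 = x}) := by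
      have hseteq : {x | ∃ s : (k : Fin K) × Fin (N k), π s = j₀ ∧ ω s.1 s.2 = x}
          = (fun t : (k : Fin K) × Fin (N k) => ω t.1 t.2) '' {s | π s = j₀} := by
        ext x
        constructor
        · rintro ⟨s, h1, h2⟩; exact ⟨s, h1, h2⟩
        · rintro ⟨s, h1, h2⟩; exact ⟨s, h1, h2⟩
      rw [hseteq]
      by_cases hli : LinearIndependent ℝ
          (fun s : ↥{s : (k : Fin K) × Fin (N k) | π s = j₀} => ω s.1.1 s.1.2)
      · have hcard2 := finrank_span_eq_card hli
        have hrange : Set.range (fun s : ↥{s : (k : Fin K) × Fin (N k) | π s = j₀} => ω s.1.1 s.1.2)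
            = (fun t : (k : Fin K) × Fin (N k) => ω t.1 t.2) '' {s | π s = j₀} :=
          (Set.image_eq_range (fun t : (k : Fin K) × Fin (N k) => ω t.1 t.2) {s | π s = j₀}).symm
        rw [← hrange, hcard2]
        have : Fintype.card ↥{s : (k : Fin K) × Fin (N k) | π s = j₀}
            = (Finset.univ.filter fun s : (k : Fin K) × Fin (N k) => π s = j₀).card :=
          Fintype.card_subtype _
        omega
      · obtain ⟨s, hsA, hsmem⟩ := exists_redundant
          (fun t : (k : Fin K) × Fin (N k) => ω t.1 t.2) {s | π s = j₀} hli
        have hLle := gB s ({s' | π s' = j₀} \ {s}) (fun hc => hc.2 rfl) hsmem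
        -- pick a point of the fiber from a different subspace
        obtain ⟨a, b, ha, hb, hab⟩ := hmix
        have hex : ∃ t : (k : Fin K) × Fin (N k), π t = j₀ ∧ t.1 ≠ s.1 := by
          by_cases has : a.1 = s.1
          · exact ⟨b, hb, fun hc => hab (has ▸ hc ▸ rfl)⟩
          · exact ⟨a, ha, has⟩
        obtain ⟨t, htj, hts⟩ := hex
        set T := Submodule.span ℝ
          ((fun t : (k : Fin K) × Fin (N k) => ω t.1 t.2) '' {s | π s = j₀}) with hT
        have hLT : L s.1 ≤ T :=
          le_trans hLle (Submodule.span_mono (Set.image_mono Set.diff_subset))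
        have hvT : ω t.1 t.2 ∈ T := Submodule.subset_span ⟨t, htj, rfl⟩
        have hvnL : ω t.1 t.2 ∉ L s.1 := g2 t s.1 (fun hc => hts hc.symm)
        set W := L s.1 ⊔ Submodule.span ℝ {ω t.1 t.2} with hW
        have hWle : W ≤ T := sup_le hLT (by
          rw [Submodule.span_le]
          intro x hx
          rw [Set.mem_singleton_iff] at hx
          exact hx ▸ hvT)
        have hlt : L s.1 < W := by
          refine lt_of_le_of_ne le_sup_left (fun heq => hvnL ?_)
          rw [heq]
          exact Submodule.mem_sup_right (Submodule.mem_span_singleton_self _)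
        have h2 : Module.finrank ℝ (L s.1) < Module.finrank ℝ W :=
          Submodule.finrank_lt_finrank_of_lt hlt
        have h3 : Module.finrank ℝ W ≤ Module.finrank ℝ T := Submodule.finrank_mono hWle
        have h4 : π s = j₀ := hsA
        rw [hLd] at h2
        omega
    -- final computation
    have hnatsum : (∑ j : Fin K, (Module.finrank ℝ
        (Submodule.span ℝ {x | ∃ s : (k : Fin K) × Fin (N k), s.1 = j ∧ ω s.1 s.2 = x}) : ℝ) ^ p)
        = (K : ℝ) * (d : ℝ) ^ p := by
      have : ∀ j : Fin K, ((Module.finrank ℝ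
          (Submodule.span ℝ {x | ∃ s : (k : Fin K) × Fin (N k), s.1 = j ∧ ω s.1 s.2 = x}) : ℝ)) ^ p
          = (d : ℝ) ^ p := by
        intro j
        rw [hnat j, hLd j]
      rw [Finset.sum_congr rfl (fun j _ => this j), Finset.sum_const, Finset.card_univ,
        Fintype.card_fin, nsmul_eq_mul]
    have hothersum : ((d : ℝ) + 1) ^ p ≤ ∑ j : Fin K, (Module.finrank ℝ
        (Submodule.span ℝ {x | ∃ s : (k : Fin K) × Fin (N k), π s = j ∧ ω s.1 s.2 = x}) : ℝ) ^ p := by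
      have h1 : ((d : ℝ) + 1) ^ p ≤ ((Module.finrank ℝ
          (Submodule.span ℝ {x | ∃ s : (k : Fin K) × Fin (N k), π s = j₀ ∧ ω s.1 s.2 = x}) : ℝ)) ^ p := by
        apply Real.rpow_le_rpow (by positivity) ?_ hp0.le
        have : ((d : ℝ) + 1) = ((d + 1 : ℕ) : ℝ) := by push_cast; ring
        rw [this]
        exact_mod_cast hbig
      refine le_trans h1 (Finset.single_le_sum (f := fun j => ((Module.finrank ℝ
          (Submodule.span ℝ {x | ∃ s : (k : Fin K) × Fin (N k), π s = j ∧ ω s.1 s.2 = x}) : ℝ)) ^ p)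
        (fun j _ => Real.rpow_nonneg (Nat.cast_nonneg _) p) (Finset.mem_univ j₀))
    rw [hnatsum]
    calc ((K : ℝ) * (d : ℝ) ^ p) ^ (1 / p)
        < (((d : ℝ) + 1) ^ p) ^ (1 / p) := by
          apply Real.rpow_lt_rpow (by positivity) hKd (by positivity)
      _ ≤ _ := Real.rpow_le_rpow (by positivity) hothersum (by positivity)
  -- # The probabilistic part
  have hBadNull : P Goodᶜ = 0 := by
    have hEval : ∀ (s : (k : Fin K) × Fin (N k)) (A : Set (Fin D → ℝ)), MeasurableSet A →
        μ s.1 A = 0 →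
        P {ω : (k : Fin K) → Fin (N k) → (Fin D → ℝ) | ω s.1 s.2 ∈ A} = 0 := by
      rintro ⟨k₀, i₀⟩ A hA h0
      rw [hP]
      apply pi_null_of_update (fun k => Measure.pi fun _ : Fin (N k) => μ k) k₀
        (B := {ω : (k : Fin K) → Fin (N k) → (Fin D → ℝ) | ω k₀ i₀ ∈ A})
        (((measurable_pi_apply i₀).comp (measurable_pi_apply k₀)) hA)
      intro f
      have hseteq : {x : Fin (N k₀) → (Fin D → ℝ) | Function.update f k₀ x ∈
          {ω : (k : Fin K) → Fin (N k) → (Fin D → ℝ) | ω k₀ i₀ ∈ A}}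
          = {g : Fin (N k₀) → (Fin D → ℝ) | g i₀ ∈ A} := by
        ext g
        simp only [Set.mem_setOf_eq, Function.update_self]
      rw [hseteq]
      apply pi_null_of_update (fun _ : Fin (N k₀) => μ k₀) i₀
        (B := {g : Fin (N k₀) → (Fin D → ℝ) | g i₀ ∈ A}) ((measurable_pi_apply i₀) hA)
      intro g
      have hseteq2 : {x : Fin D → ℝ | Function.update g i₀ x ∈
          {g : Fin (N k₀) → (Fin D → ℝ) | g i₀ ∈ A}} = A := by
        ext x
        simp only [Set.mem_setOf_eq, Function.update_self]
      rw [hseteq2]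
      exact h0
    have hμL : ∀ (k k' : Fin K), k ≠ k' → μ k' (L k : Set (Fin D → ℝ)) = 0 := by
      intro k k' hkk
      have hsub : (L k : Set (Fin D → ℝ)) ⊆ ((L k' : Set (Fin D → ℝ)))ᶜ ∪ ↑(L k ⊓ L k') := by
        intro x hx
        by_cases hx' : x ∈ L k'
        · exact Or.inr (Submodule.mem_inf.2 ⟨hx, hx'⟩)
        · exact Or.inl hx'
      refine measure_mono_null hsub (measure_union_null (hsupp k') (hnd k' (L k ⊓ L k') ?_))
      refine lt_of_le_of_ne inf_le_right (fun heq => ?_)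
      have hle : L k' ≤ L k := by
        calc L k' = L k ⊓ L k' := heq.symm
          _ ≤ L k := inf_le_left
      have : L k' = L k := Submodule.eq_of_le_of_finrank_eq hle (by rw [hLd, hLd])
      exact hkk (hLinj this).symm
    have hB3 : ∀ (s₀ : (k : Fin K) × Fin (N k)) (S : Set ((k : Fin K) × Fin (N k))), s₀ ∉ S →
        P {ω : (k : Fin K) → Fin (N k) → (Fin D → ℝ) |
            ω s₀.1 s₀.2 ∈ Submodule.span ℝ
              ((fun t : (k : Fin K) × Fin (N k) => ω t.1 t.2) '' S) ∧
            ¬ L s₀.1 ≤ Submodule.span ℝ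
              ((fun t : (k : Fin K) × Fin (N k) => ω t.1 t.2) '' S)} = 0 := by
      rintro ⟨k₀, i₀⟩ S hS
      haveI : Finite ↥S := Subtype.finite
      letI : Fintype ↥S := Fintype.ofFinite _
      -- measurability of span membership events
      have hmem : ∀ (u : ((k : Fin K) → Fin (N k) → (Fin D → ℝ)) → (Fin D → ℝ)), Measurable u →
          MeasurableSet {ω : (k : Fin K) → Fin (N k) → (Fin D → ℝ) |
            u ω ∈ Submodule.span ℝ ((fun t : (k : Fin K) × Fin (N k) => ω t.1 t.2) '' S)} := by
        intro u hu
        have hseteq : {ω : (k : Fin K) → Fin (N k) → (Fin D → ℝ) |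
              u ω ∈ Submodule.span ℝ ((fun t : (k : Fin K) × Fin (N k) => ω t.1 t.2) '' S)}
            = (fun ω : (k : Fin K) → Fin (N k) → (Fin D → ℝ) =>
                (u ω, fun t : ↥S => ω t.1.1 t.1.2)) ⁻¹'
              {q : (Fin D → ℝ) × (↥S → (Fin D → ℝ)) | q.1 ∈ Submodule.span ℝ (Set.range q.2)} := by
          ext ω
          have him : ((fun t : (k : Fin K) × Fin (N k) => ω t.1 t.2) '' S)
              = Set.range (fun t : ↥S => ω t.1.1 t.1.2) :=
            Set.image_eq_range (fun t : (k : Fin K) × Fin (N k) => ω t.1 t.2) S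
          simp only [Set.mem_setOf_eq, Set.mem_preimage, him]
        rw [hseteq]
        have h2' : Measurable fun ω : (k : Fin K) → Fin (N k) → (Fin D → ℝ) =>
            (fun t : ↥S => ω t.1.1 t.1.2) :=
          measurable_pi_lambda _ fun t =>
            (measurable_pi_apply t.1.2).comp (measurable_pi_apply t.1.1)
        exact (measurableSet_mem_span D ↥S).preimage (Measurable.prod hu h2')
      obtain ⟨w, hw⟩ : ∃ w : Fin (Module.finrank ℝ ↥(L k₀)) → (Fin D → ℝ),
          Submodule.span ℝ (Set.range w) = L k₀ := by
        let b := Module.finBasis ℝ ↥(L k₀)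
        refine ⟨fun i => (b i : Fin D → ℝ), ?_⟩
        have h1 : Set.range (fun i => (b i : Fin D → ℝ)) = (L k₀).subtype '' Set.range ⇑b := by
          rw [← Set.range_comp]
          rfl
        rw [h1, Submodule.span_image, b.span_eq, Submodule.map_top, Submodule.range_subtype]
      have hleiff : ∀ (M : Submodule ℝ (Fin D → ℝ)), L k₀ ≤ M ↔ ∀ i, w i ∈ M := by
        intro M
        constructor
        · intro h i
          exact h (hw ▸ Submodule.subset_span (Set.mem_range_self i))
        · intro h
          rw [← hw]
          exact Submodule.span_le.2 (Set.range_subset_iff.2 h)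
      have hmeas : MeasurableSet {ω : (k : Fin K) → Fin (N k) → (Fin D → ℝ) |
          ω k₀ i₀ ∈ Submodule.span ℝ ((fun t : (k : Fin K) × Fin (N k) => ω t.1 t.2) '' S) ∧
          ¬ L k₀ ≤ Submodule.span ℝ ((fun t : (k : Fin K) × Fin (N k) => ω t.1 t.2) '' S)} := by
        have h1 := hmem (fun ω => ω k₀ i₀)
          ((measurable_pi_apply i₀).comp (measurable_pi_apply k₀))
        have h2 : MeasurableSet {ω : (k : Fin K) → Fin (N k) → (Fin D → ℝ) |
            ¬ L k₀ ≤ Submodule.span ℝ ((fun t : (k : Fin K) × Fin (N k) => ω t.1 t.2) '' S)} := by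
          have hseteq : {ω : (k : Fin K) → Fin (N k) → (Fin D → ℝ) |
              ¬ L k₀ ≤ Submodule.span ℝ ((fun t : (k : Fin K) × Fin (N k) => ω t.1 t.2) '' S)}
              = (⋂ i, {ω : (k : Fin K) → Fin (N k) → (Fin D → ℝ) |
                  w i ∈ Submodule.span ℝ ((fun t : (k : Fin K) × Fin (N k) => ω t.1 t.2) '' S)})ᶜ := by
            ext ω
            simp only [Set.mem_setOf_eq, Set.mem_compl_iff, Set.mem_iInter, hleiff]
          rw [hseteq]
          exact (MeasurableSet.iInter fun i => hmem (fun _ => w i) measurable_const).compl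
        exact h1.inter h2
      rw [hP]
      apply pi_null_of_update (fun k => Measure.pi fun _ : Fin (N k) => μ k) k₀ hmeas
      intro f
      apply pi_null_of_update (fun _ : Fin (N k₀) => μ k₀) i₀ (hmeas.preimage (measurable_update f))
      intro g
      have hup : ∀ x : Fin D → ℝ, Function.update f k₀ (Function.update g i₀ x) k₀ i₀ = x := by
        intro x
        rw [Function.update_self, Function.update_self]
      have himg : ∀ x : Fin D → ℝ,
          ((fun t : (k : Fin K) × Fin (N k) =>
              Function.update f k₀ (Function.update g i₀ x) t.1 t.2) '' S)
          = ((fun t : (k : Fin K) × Fin (N k) =>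
              Function.update f k₀ (Function.update g i₀ (0 : Fin D → ℝ)) t.1 t.2) '' S) := by
        intro x
        apply Set.image_congr
        rintro ⟨tk, ti⟩ htS
        by_cases htk : tk = k₀
        · subst htk
          simp only [Function.update_self]
          have hti : ti ≠ i₀ := by
            rintro rfl
            exact hS htS
          rw [Function.update_of_ne hti, Function.update_of_ne hti]
        · simp only [Function.update_of_ne htk]
      by_cases hle : L k₀ ≤ Submodule.span ℝ ((fun t : (k : Fin K) × Fin (N k) =>
          Function.update f k₀ (Function.update g i₀ (0 : Fin D → ℝ)) t.1 t.2) '' S)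
      · refine measure_mono_null (t := ∅) (fun x hx => ?_) measure_empty
        have h2 : ¬ L k₀ ≤ Submodule.span ℝ ((fun t : (k : Fin K) × Fin (N k) =>
            Function.update f k₀ (Function.update g i₀ x) t.1 t.2) '' S) := hx.2
        rw [himg x] at h2
        exact (h2 hle).elim
      · refine measure_mono_null (t := (Submodule.span ℝ ((fun t : (k : Fin K) × Fin (N k) =>
            Function.update f k₀ (Function.update g i₀ (0 : Fin D → ℝ)) t.1 t.2) '' S)
            : Set (Fin D → ℝ))) (fun x hx => ?_) ?_
        · have h1 : Function.update f k₀ (Function.update g i₀ x) k₀ i₀ ∈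
              Submodule.span ℝ ((fun t : (k : Fin K) × Fin (N k) =>
                Function.update f k₀ (Function.update g i₀ x) t.1 t.2) '' S) := hx.1
          rw [hup x, himg x] at h1
          exact h1
        · refine measure_mono_null
            (t := ((L k₀ : Set (Fin D → ℝ)))ᶜ ∪ ↑((Submodule.span ℝ ((fun t : (k : Fin K) × Fin (N k) =>
              Function.update f k₀ (Function.update g i₀ (0 : Fin D → ℝ)) t.1 t.2) '' S)) ⊓ L k₀))
            (fun x hx => ?_)
            (measure_union_null (hsupp k₀) (hnd k₀ _ ?_))
          · by_cases hxL : x ∈ L k₀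
            · exact Or.inr (Submodule.mem_inf.2 ⟨hx, hxL⟩)
            · exact Or.inl hxL
          · refine lt_of_le_of_ne inf_le_right (fun heq => hle ?_)
            calc L k₀ = _ ⊓ L k₀ := heq.symm
              _ ≤ _ := inf_le_left
    -- combine all bad events
    haveI : Finite (Set ((k : Fin K) × Fin (N k))) :=
      Finite.of_equiv (((k : Fin K) × Fin (N k)) → Prop)
        (Equiv.refl _ : (((k : Fin K) × Fin (N k)) → Prop) ≃ Set ((k : Fin K) × Fin (N k)))
    have hsub : Goodᶜ ⊆
        ((⋃ s : (k : Fin K) × Fin (N k),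
            {ω : (k : Fin K) → Fin (N k) → (Fin D → ℝ) | ω s.1 s.2 ∈ ((L s.1 : Set (Fin D → ℝ)))ᶜ})
          ∪ (⋃ s : (k : Fin K) × Fin (N k), ⋃ k : Fin K, ⋃ (_ : k ≠ s.1),
            {ω : (k : Fin K) → Fin (N k) → (Fin D → ℝ) | ω s.1 s.2 ∈ (L k : Set (Fin D → ℝ))}))
          ∪ (⋃ s : (k : Fin K) × Fin (N k), ⋃ S : Set ((k : Fin K) × Fin (N k)), ⋃ (_ : s ∉ S),
            {ω : (k : Fin K) → Fin (N k) → (Fin D → ℝ) |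
              ω s.1 s.2 ∈ Submodule.span ℝ
                ((fun t : (k : Fin K) × Fin (N k) => ω t.1 t.2) '' S) ∧
              ¬ L s.1 ≤ Submodule.span ℝ
                ((fun t : (k : Fin K) × Fin (N k) => ω t.1 t.2) '' S)}) := by
      intro ω hω
      by_cases c1 : ∀ s : (k : Fin K) × Fin (N k), ω s.1 s.2 ∈ L s.1
      · by_cases c2 : ∀ (s : (k : Fin K) × Fin (N k)) (k : Fin K), k ≠ s.1 → ω s.1 s.2 ∉ L k
        · have c3 : ¬ (∀ (s : (k : Fin K) × Fin (N k)) (S : Set ((k : Fin K) × Fin (N k))),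
              s ∉ S → ω s.1 s.2 ∈ Submodule.span ℝ
                ((fun t : (k : Fin K) × Fin (N k) => ω t.1 t.2) '' S) →
              L s.1 ≤ Submodule.span ℝ
                ((fun t : (k : Fin K) × Fin (N k) => ω t.1 t.2) '' S)) := by
            intro c3
            exact hω ⟨c1, c2, c3⟩
          push_neg at c3
          obtain ⟨s, S, hsS, hmem2, hnle⟩ := c3
          exact Or.inr (Set.mem_iUnion.2 ⟨s, Set.mem_iUnion.2 ⟨S, Set.mem_iUnion.2
            ⟨hsS, hmem2, hnle⟩⟩⟩)
        · push_neg at c2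
          obtain ⟨s, k, hk, hmem2⟩ := c2
          exact Or.inl (Or.inr (Set.mem_iUnion.2 ⟨s, Set.mem_iUnion.2 ⟨k, Set.mem_iUnion.2
            ⟨hk, hmem2⟩⟩⟩))
      · push_neg at c1
        obtain ⟨s, hs⟩ := c1
        exact Or.inl (Or.inl (Set.mem_iUnion.2 ⟨s, hs⟩))
    refine measure_mono_null hsub (measure_union_null (measure_union_null ?_ ?_) ?_)
    · exact measure_iUnion_null fun s => hEval s _
        ((Submodule.closed_of_finiteDimensional _).measurableSet.compl) (hsupp s.1)
    · exact measure_iUnion_null fun s => measure_iUnion_null fun k =>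
        measure_iUnion_null fun hk => hEval s _
          (Submodule.closed_of_finiteDimensional _).measurableSet (hμL k s.1 hk)
    · exact measure_iUnion_null fun s => measure_iUnion_null fun S =>
        measure_iUnion_null fun hS => hB3 s S hS
  -- # Conclusion
  haveI : IsProbabilityMeasure P := by infer_instance
  apply le_antisymm
  · exact prob_le_one
  · calc (1 : ENNReal) = P Set.univ := measure_univ.symm
      _ ≤ P ({ω : (k : Fin K) → Fin (N k) → (Fin D → ℝ) |
          ∀ π : ((k : Fin K) × Fin (N k)) → Fin K,
          (¬ ∀ s t, π s = π t ↔ s.1 = t.1) →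
          (∑ j : Fin K, (Module.finrank ℝ
              (Submodule.span ℝ {x | ∃ s : (k : Fin K) × Fin (N k), s.1 = j ∧ ω s.1 s.2 = x}) : ℝ) ^ p) ^ (1 / p)
          < (∑ j : Fin K, (Module.finrank ℝ
              (Submodule.span ℝ {x | ∃ s : (k : Fin K) × Fin (N k), π s = j ∧ ω s.1 s.2 = x}) : ℝ) ^ p) ^ (1 / p)}
          ∪ Goodᶜ) := by
        apply measure_mono
        intro ω _
        by_cases hω : ω ∈ Good
        · exact Or.inl (hGoodE ω hω)
        · exact Or.inr hω
      _ ≤ _ + P Goodᶜ := measure_union_le _ _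
      _ = _ := by rw [hBadNull, add_zero]
end

section
/- Let a data set of N points in ℝ^D consist of points from K distinct d-subspaces L₁,...,L_K with more than d points in each subspace, such that for each proper subset no d+1 of the points from any L_k lie in a proper subspace of L_k and no point of one subspace lies in the span of finitely many points from the others unless forced (general position assumption as in the paper's Lemma 2). If a partition Π of the data into at most K sets is not the natural partition and every set of Π spans a subspace of dimension at most d, then a contradiction arises; hence every non-natural partition has a set whose span has dimension at least d+1. -/
/-- Main Lemma of the paper (deterministic form): under general position, every
non-natural partition of the data into at most K sets contains a set whose span has
dimension at least d+1. -/
theorem non_natural_partition_has_big_set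
    (D d K : ℕ) (hd : 1 ≤ d) (hK : 1 ≤ K)
    (L : Fin K → Submodule ℝ (Fin D → ℝ)) (hLinj : Function.Injective L)
    (hLd : ∀ k, Module.finrank ℝ (L k) = d)
    (N : Fin K → ℕ) (hN : ∀ k, d < N k)
    (x : ((k : Fin K) × Fin (N k)) → (Fin D → ℝ))
    (hxL : ∀ s, x s ∈ L s.1) (hxinj : Function.Injective x)
    (hindep : ∀ (k : Fin K) (T : Finset (Fin (N k))), T.card ≤ d →
      LinearIndependent ℝ (fun i : T => x ⟨k, i.1⟩))
    (hgen : ∀ (s : (k : Fin K) × Fin (N k)) (Q : Finset ((k : Fin K) × Fin (N k))),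
      s ∉ Q → ¬ (L s.1 ≤ Submodule.span ℝ (x '' ↑Q)) →
      x s ∉ Submodule.span ℝ (x '' ↑Q))
    (π : ((k : Fin K) × Fin (N k)) → Fin K)
    (hπ : ¬ ∀ s t, π s = π t ↔ s.1 = t.1) :
    ∃ j : Fin K, d + 1 ≤ Module.finrank ℝ
      (Submodule.span ℝ (x '' {s | π s = j})) := by
  classical
  by_contra hcon
  push_neg at hcon
  -- Step 1 : span of any d points of subspace k equals L k
  have hBig : ∀ (k : Fin K) (Q : Finset (Fin (N k))), Q.card = d →
      Submodule.span ℝ (x '' ((Q.image (Sigma.mk k) : Finset ((k : Fin K) × Fin (N k))) : Set ((k : Fin K) × Fin (N k)))) = L k := by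
    intro k Q hQ
    have hle : Submodule.span ℝ (x '' ((Q.image (Sigma.mk k) : Finset ((k : Fin K) × Fin (N k))) : Set ((k : Fin K) × Fin (N k)))) ≤ L k := by
      rw [Submodule.span_le]
      rintro y ⟨s, hs, rfl⟩
      simp only [Finset.coe_image, Set.mem_image, Finset.mem_coe] at hs
      obtain ⟨i, _, rfl⟩ := hs
      exact hxL ⟨k, i⟩
    have hind := hindep k Q (le_of_eq hQ)
    have hset : x '' ((Q.image (Sigma.mk k) : Finset ((k : Fin K) × Fin (N k))) : Set ((k : Fin K) × Fin (N k))) = Set.range (fun i : ↥Q => x ⟨k, i.1⟩) := by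
      rw [Finset.coe_image, Set.image_image]
      ext y
      simp only [Set.mem_image, Finset.mem_coe, Set.mem_range, Subtype.exists]
      constructor
      · rintro ⟨i, hi, rfl⟩; exact ⟨i, hi, rfl⟩
      · rintro ⟨i, hi, rfl⟩; exact ⟨i, hi, rfl⟩
    have hfr : Module.finrank ℝ (Submodule.span ℝ (x '' ((Q.image (Sigma.mk k) : Finset ((k : Fin K) × Fin (N k))) : Set ((k : Fin K) × Fin (N k))))) = d := by
      rw [hset, finrank_span_eq_card hind, Fintype.card_coe, hQ]
    exact Submodule.eq_of_le_of_finrank_le hle (by rw [hfr, hLd k])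
  -- Step 2 : a point of a subspace lies in no other subspace
  have hmemL : ∀ (s : (k : Fin K) × Fin (N k)) (k : Fin K), x s ∈ L k → s.1 = k := by
    intro s k hs
    by_contra hne
    set Q0 : Finset (Fin (N k)) :=
      Finset.univ.map (Fin.castLEEmb (hN k).le) with hQ0def
    have hQ0 : Q0.card = d := by
      rw [hQ0def, Finset.card_map, Finset.card_univ, Fintype.card_fin]
    have hspan := hBig k Q0 hQ0
    have hsQ : s ∉ Q0.image (Sigma.mk k) := by
      intro h
      obtain ⟨i, _, hi⟩ := Finset.mem_image.mp h
      exact hne (by rw [← hi])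
    have hnle : ¬ (L s.1 ≤ Submodule.span ℝ (x '' ((Q0.image (Sigma.mk k) : Finset ((k : Fin K) × Fin (N k))) : Set ((k : Fin K) × Fin (N k))))) := by
      rw [hspan]
      intro hle
      exact hne (hLinj (Submodule.eq_of_le_of_finrank_le hle (by rw [hLd, hLd])))
    exact hgen s _ hsQ hnle (hspan ▸ hs)
  -- classes as finsets
  set Qf : Fin K → Finset ((k : Fin K) × Fin (N k)) :=
    fun j => Finset.univ.filter (fun s => π s = j) with hQfdef
  have hQfc : ∀ j, ({s | π s = j} : Set ((k : Fin K) × Fin (N k))) = ↑(Qf j) := by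
    intro j; ext s; simp [hQfdef]
  have hmemQf : ∀ s : (k : Fin K) × Fin (N k), s ∈ Qf (π s) := by
    intro s; simp [hQfdef]
  have hWd : ∀ j, Module.finrank ℝ (Submodule.span ℝ (x '' ↑(Qf j))) ≤ d := by
    intro j
    have h := hcon j
    rw [hQfc j] at h
    omega
  -- Step 3 : a nonempty class whose span is no L k has at most d points
  have hII : ∀ j, ¬ (∃ k, Submodule.span ℝ (x '' ↑(Qf j)) = L k) → (Qf j).card ≤ d := by
    intro j hnot
    have hni : ∀ s : ↥(Qf j), x s.1 ∉ Submodule.span ℝ (x '' ↑((Qf j).erase s.1)) := by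
      intro s
      have hser : s.1 ∉ (Qf j).erase s.1 := Finset.notMem_erase s.1 _
      have hle1 : Submodule.span ℝ (x '' ↑((Qf j).erase s.1)) ≤
          Submodule.span ℝ (x '' ↑(Qf j)) :=
        Submodule.span_mono (Set.image_mono (by
          exact_mod_cast Finset.erase_subset s.1 (Qf j)))
      by_cases hcase : L s.1.1 ≤ Submodule.span ℝ (x '' ↑((Qf j).erase s.1))
      · exfalso
        have h1 : Module.finrank ℝ (Submodule.span ℝ (x '' ↑((Qf j).erase s.1))) ≤ d :=
          le_trans (Submodule.finrank_mono hle1) (hWd j)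
        have h2 : L s.1.1 = Submodule.span ℝ (x '' ↑((Qf j).erase s.1)) :=
          Submodule.eq_of_le_of_finrank_le hcase (by rw [hLd]; exact h1)
        have h3 : Submodule.span ℝ (x '' ↑(Qf j)) = L s.1.1 := by
          apply le_antisymm
          · rw [Submodule.span_le]
            rintro y ⟨t, ht, rfl⟩
            rcases eq_or_ne t s.1 with heq | hts
            · rw [heq]; exact hxL s.1
            · rw [h2]
              exact Submodule.subset_span
                ⟨t, Finset.mem_coe.mpr (Finset.mem_erase.mpr ⟨hts, Finset.mem_coe.mp ht⟩), rfl⟩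
          · exact h2.le.trans hle1
        exact hnot ⟨s.1.1, h3⟩
      · exact hgen s.1 _ hser hcase
    have hind : LinearIndependent ℝ (fun t : ↥(Qf j) => x t.1) := by
      rw [linearIndependent_iff_notMem_span]
      intro i
      have himg : (fun t : ↥(Qf j) => x t.1) '' (Set.univ \ {i}) =
          x '' ↑((Qf j).erase i.1) := by
        ext y
        constructor
        · rintro ⟨t, ⟨-, hti⟩, rfl⟩
          exact ⟨t.1, Finset.mem_coe.mpr (Finset.mem_erase.mpr
            ⟨fun h => hti (by simpa using Subtype.ext h), t.2⟩), rfl⟩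
        · rintro ⟨t, ht, rfl⟩
          obtain ⟨hts, htQ⟩ := Finset.mem_erase.mp (Finset.mem_coe.mp ht)
          exact ⟨⟨t, htQ⟩, ⟨Set.mem_univ _,
            fun h => hts (by simpa using congrArg Subtype.val (Set.mem_singleton_iff.mp h))⟩, rfl⟩
      rw [himg]
      exact hni i
    have hrange : Set.range (fun t : ↥(Qf j) => x t.1) = x '' ↑(Qf j) := by
      ext y
      simp only [Set.mem_range, Set.mem_image, Finset.mem_coe, Subtype.exists]
      constructor
      · rintro ⟨t, ht, rfl⟩; exact ⟨t, ht, rfl⟩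
      · rintro ⟨t, ht, rfl⟩; exact ⟨t, ht, rfl⟩
    have hcard : (Qf j).card = Module.finrank ℝ (Submodule.span ℝ (x '' ↑(Qf j))) := by
      rw [← hrange, finrank_span_eq_card hind, Fintype.card_coe]
    rw [hcard]
    exact hWd j
  -- Step 4 : counting
  let κ : Fin K → Fin K := fun j =>
    if h : ∃ k, Submodule.span ℝ (x '' ↑(Qf j)) = L k then h.choose else j
  have hκ : ∀ j (h : ∃ k, Submodule.span ℝ (x '' ↑(Qf j)) = L k),
      Submodule.span ℝ (x '' ↑(Qf j)) = L (κ j) := by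
    intro j h
    simp only [κ, dif_pos h]
    exact h.choose_spec
  set J1 : Finset (Fin K) :=
    Finset.univ.filter (fun j => ∃ k, Submodule.span ℝ (x '' ↑(Qf j)) = L k) with hJ1def
  set J2 : Finset (Fin K) :=
    Finset.univ.filter (fun j => (Qf j).Nonempty ∧
      ¬ ∃ k, Submodule.span ℝ (x '' ↑(Qf j)) = L k) with hJ2def
  set A : Finset (Fin K) := J1.image κ with hAdef
  have hkey : ∀ s : (k : Fin K) × Fin (N k), s.1 ∉ A → π s ∈ J2 := by
    intro s hsA
    rw [hJ2def, Finset.mem_filter]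
    refine ⟨Finset.mem_univ _, ⟨s, hmemQf s⟩, ?_⟩
    rintro ⟨k, hk⟩
    have hs1 : s.1 = k :=
      hmemL s k (hk ▸ Submodule.subset_span (Set.mem_image_of_mem x (Finset.mem_coe.mpr (hmemQf s))))
    have hJ1mem : π s ∈ J1 := by
      rw [hJ1def, Finset.mem_filter]; exact ⟨Finset.mem_univ _, ⟨k, hk⟩⟩
    have hk2 : k = κ (π s) := hLinj (hk ▸ hκ (π s) ⟨k, hk⟩)
    exact hsA (by rw [hs1, hk2, hAdef]; exact Finset.mem_image_of_mem κ hJ1mem)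
  set B : Finset (Fin K) := Aᶜ with hBdef
  have hcard1 : B.card * (d + 1) ≤ ∑ k ∈ B, N k := by
    calc B.card * (d + 1) = ∑ _k ∈ B, (d + 1) := by
          rw [Finset.sum_const, smul_eq_mul]
      _ ≤ ∑ k ∈ B, N k := Finset.sum_le_sum (fun k _ => hN k)
  have hScard : (B.sigma (fun k => (Finset.univ : Finset (Fin (N k))))).card = ∑ k ∈ B, N k := by
    rw [Finset.card_sigma]
    simp
  have hSsub : B.sigma (fun k => (Finset.univ : Finset (Fin (N k)))) ⊆ J2.biUnion Qf := by
    intro s hsS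
    have hs1 : s.1 ∈ B := by
      rcases s with ⟨k, i⟩
      exact (Finset.mem_sigma.mp hsS).1
    exact Finset.mem_biUnion.mpr ⟨π s, hkey s (Finset.mem_compl.mp hs1), hmemQf s⟩
  have hsum2 : ∑ k ∈ B, N k ≤ J2.card * d := by
    calc ∑ k ∈ B, N k = (B.sigma (fun k => (Finset.univ : Finset (Fin (N k))))).card :=
          hScard.symm
      _ ≤ (J2.biUnion Qf).card := Finset.card_le_card hSsub
      _ ≤ ∑ j ∈ J2, (Qf j).card := Finset.card_biUnion_le
      _ ≤ ∑ _j ∈ J2, d := Finset.sum_le_sum (fun j hj => by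
          rw [hJ2def, Finset.mem_filter] at hj
          exact hII j hj.2.2)
      _ = J2.card * d := by rw [Finset.sum_const, smul_eq_mul]
  have hdisj : Disjoint J1 J2 := by
    rw [Finset.disjoint_left]
    intro j hj1 hj2
    rw [hJ1def, Finset.mem_filter] at hj1
    rw [hJ2def, Finset.mem_filter] at hj2
    exact hj2.2.2 hj1.2
  have hJ12 : J1.card + J2.card ≤ K := by
    calc J1.card + J2.card = (J1 ∪ J2).card := (Finset.card_union_of_disjoint hdisj).symm
      _ ≤ (Finset.univ : Finset (Fin K)).card := Finset.card_le_card (Finset.subset_univ _)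
      _ = K := by rw [Finset.card_univ, Fintype.card_fin]
  have hA1 : A.card ≤ J1.card := Finset.card_image_le
  have hBA : B.card = K - A.card := by
    rw [hBdef, Finset.card_compl, Fintype.card_fin]
  have hB0 : B.card = 0 := by
    have h1 : J2.card ≤ B.card := by omega
    have h2 : B.card * (d + 1) ≤ B.card * d :=
      le_trans hcard1 (le_trans hsum2 (Nat.mul_le_mul_right d h1))
    nlinarith
  -- hence A = univ, J2 = ∅
  have hAuniv : ∀ k : Fin K, k ∈ A := by
    intro k
    by_contra hk
    have : k ∈ B := Finset.mem_compl.mpr hk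
    rw [Finset.card_eq_zero] at hB0
    simp [hB0] at this
  have hJ2empty : J2 = ∅ := by
    have hAK : A.card = K := by
      have : A = Finset.univ := Finset.eq_univ_iff_forall.mpr hAuniv
      rw [this, Finset.card_univ, Fintype.card_fin]
    rw [← Finset.card_eq_zero]
    omega
  -- Step 5 : every class is contained in a single subspace
  have hmono : ∀ s t, π s = π t → s.1 = t.1 := by
    intro s t hst
    have hs : s ∈ Qf (π s) := hmemQf s
    have ht : t ∈ Qf (π s) := by rw [hst]; exact hmemQf t
    have hex : ∃ k, Submodule.span ℝ (x '' ↑(Qf (π s))) = L k := by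
      by_contra h
      have : π s ∈ J2 := by
        rw [hJ2def, Finset.mem_filter]
        exact ⟨Finset.mem_univ _, ⟨s, hs⟩, h⟩
      rw [hJ2empty] at this
      exact Finset.notMem_empty _ this
    obtain ⟨k, hk⟩ := hex
    have h1 : s.1 = k :=
      hmemL s k (hk ▸ Submodule.subset_span (Set.mem_image_of_mem x (Finset.mem_coe.mpr hs)))
    have h2 : t.1 = k :=
      hmemL t k (hk ▸ Submodule.subset_span (Set.mem_image_of_mem x (Finset.mem_coe.mpr ht)))
    rw [h1, h2]
  -- Step 6 : conclude π is the natural partition, contradiction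
  apply hπ
  have hpos : ∀ k, 0 < N k := fun k => lt_of_le_of_lt (Nat.zero_le d) (hN k)
  set f : Fin K → Fin K := fun k => π ⟨k, ⟨0, hpos k⟩⟩ with hfdef
  have hfinj : Function.Injective f := by
    intro k k' h
    exact hmono ⟨k, ⟨0, hpos k⟩⟩ ⟨k', ⟨0, hpos k'⟩⟩ h
  have hfsurj : Function.Surjective f := Finite.surjective_of_injective hfinj
  have hπf : ∀ s, π s = f s.1 := by
    intro s
    obtain ⟨k, hk⟩ := hfsurj (π s)
    have : k = s.1 := hmono ⟨k, ⟨0, hpos k⟩⟩ s hk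
    rw [← this, ← hk]
  intro s t
  constructor
  · exact hmono s t
  · intro h
    rw [hπf s, hπf t, h]
end
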